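/- Let p_E ∈ (0,1], u > 1, and let ξ : (0,1) → ℝ≥0 be bounded. Setting η(p) = (ln u + ξ(p))/(p_E·p), we have (1 - p_E·p)^{η(p)} = e^{-ξ(p)}/u + O(p) as p → 0. -/

import Mathlib

/-- Fact 4: for η(p) = (ln u + ξ(p))/(p_E p), (1 - p_E p)^η(p) = e^{-ξ(p)}/u + O(p). -/
theorem fact4 (pE u : ℝ) (hpE0 : 0 < pE) (hpE1 : pE ≤ 1) (hu : 1 < u)
    (ξ : ℝ → ℝ)
    (hξ0 : ∀ p ∈ Set.Ioo (0:ℝ) 1, 0 ≤ ξ p)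
    (hξb : ∃ M : ℝ, ∀ p ∈ Set.Ioo (0:ℝ) 1, ξ p ≤ M) :
    ∃ C p₀ : ℝ, 0 < C ∧ 0 < p₀ ∧ ∀ p : ℝ, 0 < p → p < p₀ →
      |Real.exp (((Real.log u + ξ p) / (pE * p)) * Real.log (1 - pE * p)) -
        Real.exp (-(ξ p)) / u| ≤ C * p := by
  obtain ⟨M, hM⟩ := hξb
  have hmem : (1/2 : ℝ) ∈ Set.Ioo (0:ℝ) 1 := by norm_num
  have hM0 : 0 ≤ M := le_trans (hξ0 _ hmem) (hM _ hmem)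
  have hlogu : 0 < Real.log u := Real.log_pos hu
  have hu0 : (0:ℝ) < u := by linarith
  set A := Real.log u + M with hA
  have hA0 : 0 < A := by linarith
  refine ⟨2 * A * pE, 1/2, by positivity, by norm_num, ?_⟩
  intro p hp hp2
  have hpmem : p ∈ Set.Ioo (0:ℝ) 1 := ⟨hp, by linarith⟩
  have hξp0 := hξ0 p hpmem
  have hξpM := hM p hpmem
  set a := Real.log u + ξ p with ha
  have ha0 : 0 < a := by linarith
  have haA : a ≤ A := by simp only [hA, ha]; linarith
  set x := pE * p with hx
  have hx0 : 0 < x := mul_pos hpE0 hp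
  have hx1 : x < 1/2 := by
    have : x ≤ p := by nlinarith
    linarith
  have h1x : 0 < 1 - x := by linarith
  have hlog_le : Real.log (1 - x) ≤ -x := by
    have := Real.log_le_sub_one_of_pos h1x; linarith
  have hlog_ge : -x - 2*x^2 ≤ Real.log (1 - x) := by
    have h2 : Real.log (1-x)⁻¹ ≤ (1-x)⁻¹ - 1 := Real.log_le_sub_one_of_pos (by positivity)
    have h3 : Real.log (1-x)⁻¹ = - Real.log (1-x) := Real.log_inv _
    have h4 : (1-x)⁻¹ - 1 = x / (1-x) := by field_simp; ring
    have h5 : x / (1-x) ≤ x + 2*x^2 := by rw [div_le_iff₀ h1x]; nlinarith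
    linarith
  -- t bounds
  set t := a * (Real.log (1-x) + x) / x with ht
  have ht0 : t ≤ 0 := by
    apply div_nonpos_of_nonpos_of_nonneg _ hx0.le
    apply mul_nonpos_of_nonneg_of_nonpos ha0.le
    linarith
  have htge : -(2*a*x) ≤ t := by
    rw [ht, le_div_iff₀ hx0]
    nlinarith
  -- rewrite exponent
  have hexp_eq : (a / x) * Real.log (1 - x) = -a + t := by
    field_simp [ht]
    have hxt : x * t = a * (Real.log (1 - x) + x) := by
      rw [ht, mul_div_assoc', mul_comm x, mul_div_assoc, div_self hx0.ne', mul_one]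
    linear_combination (-1:ℝ) * hxt
  have hrhs : Real.exp (-(ξ p)) / u = Real.exp (-a) := by
    rw [ha, neg_add, Real.exp_add, Real.exp_neg (Real.log u), Real.exp_log hu0]
    ring
  rw [hexp_eq, hrhs, Real.exp_add, abs_of_nonpos]
  · have h1 : Real.exp (-a) ≤ 1 := Real.exp_le_one_iff.mpr (by linarith)
    have h2 : 1 - Real.exp t ≤ -t := by
      have := Real.add_one_le_exp t; linarith
    have h3 : Real.exp (-a) * Real.exp t - Real.exp (-a) = -(Real.exp (-a) * (1 - Real.exp t)) := by ring
    rw [h3, neg_neg]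
    calc Real.exp (-a) * (1 - Real.exp t) ≤ 1 * (-t) := by
          apply mul_le_mul h1 h2 (by have := Real.exp_le_one_iff.mpr ht0; linarith) (by norm_num)
      _ = -t := by ring
      _ ≤ 2*a*x := by linarith
      _ ≤ 2*A*x := by nlinarith
      _ = 2*A*pE*p := by rw [hx]; ring
  · have h2 : Real.exp t ≤ 1 := Real.exp_le_one_iff.mpr ht0
    nlinarith [Real.exp_pos (-a)]
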